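/- Let f : ℝ → ℝ be continuous with f^inf ≤ f(x) ≤ f^sup for positive constants f^inf ≤ f^sup, let λ : [0,∞) → [0, λ^sup] be continuous, let g : ℝ → ℝ be continuous with 0 ≤ g(x) ≤ g^sup, let η̃ > 0 and 0 ≤ η ≤ η^sup. Suppose x : [0,∞) → ℝ is differentiable, satisfies x'(t) = f(x(t)) + λ(t) - x(t)/(η̃ + η g(x(t))) for all t, and x(0) = x_initial with 0 < x_initial < (f^sup + λ^sup)(η̃ + η^sup g^sup). Then x(t) ≤ (f^sup + λ^sup)(η̃ + η^sup g^sup) for all t ≥ 0. -/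

import Mathlib

/-- Upper bound on any feasible user-base trajectory:
under the dynamics `x' = f(x) + λ(t) - x/(η̃ + η g(x))`, the trajectory stays
below `(f^sup + λ^sup)(η̃ + η^sup g^sup)`. -/
theorem userbase_upper_bound
    (f g lam x : ℝ → ℝ) (finf fsup lamsup gsup etaT eta etasup xinit : ℝ)
    (hf_cont : Continuous f)
    (hfinf : 0 < finf) (hffs : finf ≤ fsup)
    (hf_bdd : ∀ y, finf ≤ f y ∧ f y ≤ fsup)
    (hlam_cont : Continuous lam)
    (hlam_bdd : ∀ t, 0 ≤ t → 0 ≤ lam t ∧ lam t ≤ lamsup)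
    (hg_cont : Continuous g)
    (hg_bdd : ∀ y, 0 ≤ g y ∧ g y ≤ gsup)
    (hetaT : 0 < etaT) (heta : 0 ≤ eta) (hetasup : eta ≤ etasup)
    (hderiv : ∀ t, 0 ≤ t →
      HasDerivAt x (f (x t) + lam t - x t / (etaT + eta * g (x t))) t)
    (hx0 : x 0 = xinit)
    (hxinit_pos : 0 < xinit)
    (hxinit_lt : xinit < (fsup + lamsup) * (etaT + etasup * gsup)) :
    ∀ t, 0 ≤ t → x t ≤ (fsup + lamsup) * (etaT + etasup * gsup) := by
  set M : ℝ := (fsup + lamsup) * (etaT + etasup * gsup) with hM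
  have hlamsup : 0 ≤ lamsup := le_trans (hlam_bdd 0 le_rfl).1 (hlam_bdd 0 le_rfl).2
  have hgsup : 0 ≤ gsup := le_trans (hg_bdd 0).1 (hg_bdd 0).2
  have hetasup0 : 0 ≤ etasup := le_trans heta hetasup
  have hsum : 0 < fsup + lamsup := by linarith [lt_of_lt_of_le hfinf hffs]
  have hD : 0 < etaT + etasup * gsup := by positivity
  have hMpos : 0 < M := mul_pos hsum hD
  -- by contradiction
  by_contra h
  push_neg at h
  obtain ⟨t1, ht1, hxt1⟩ := h
  -- the set of times before t1 where x ≤ M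
  set S : Set ℝ := Set.Icc 0 t1 ∩ x ⁻¹' Set.Iic M with hS
  have hcontx : ContinuousOn x (Set.Icc 0 t1) := fun t ht =>
    ((hderiv t ht.1).continuousAt).continuousWithinAt
  have hSclosed : IsClosed S := hcontx.preimage_isClosed_of_isClosed isClosed_Icc isClosed_Iic
  have h0S : (0 : ℝ) ∈ S := by
    constructor
    · exact ⟨le_rfl, ht1⟩
    · simp only [Set.mem_preimage, Set.mem_Iic, hx0]
      exact hxinit_lt.le
  have hSbdd : BddAbove S := ⟨t1, fun t ht => ht.1.2⟩
  set t0 : ℝ := sSup S with ht0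
  have ht0S : t0 ∈ S := hSclosed.csSup_mem ⟨0, h0S⟩ hSbdd
  have ht0nonneg : 0 ≤ t0 := ht0S.1.1
  have ht0le : t0 ≤ t1 := ht0S.1.2
  have hxt0 : x t0 ≤ M := ht0S.2
  have ht0lt : t0 < t1 := lt_of_le_of_ne ht0le (by
    intro hEq; rw [hEq] at hxt0; exact absurd hxt0 (not_le.mpr hxt1))
  -- on (t0, t1], x > M
  have hgt : ∀ t, t0 < t → t ≤ t1 → M < x t := by
    intro t htl htr
    by_contra hle
    push_neg at hle
    have : t ∈ S := ⟨⟨le_trans ht0nonneg htl.le, htr⟩, hle⟩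
    exact absurd (le_csSup hSbdd this) (not_le.mpr htl)
  -- derivative is negative on (t0, t1)
  have hderivneg : ∀ t ∈ interior (Set.Icc t0 t1), deriv x t < 0 := by
    intro t ht
    rw [interior_Icc] at ht
    have htpos : 0 ≤ t := le_trans ht0nonneg ht.1.le
    have hxgt : M < x t := hgt t ht.1 ht.2.le
    rw [(hderiv t htpos).deriv]
    have hgb := hg_bdd (x t)
    have hd : 0 < etaT + eta * g (x t) := by nlinarith
    have hdle : etaT + eta * g (x t) ≤ etaT + etasup * gsup := by nlinarith
    have hkey : fsup + lamsup < x t / (etaT + eta * g (x t)) := by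
      have h1 : fsup + lamsup = M / (etaT + etasup * gsup) := by
        field_simp [hM]
        exact hM.symm
      have h2 : M / (etaT + etasup * gsup) < x t / (etaT + etasup * gsup) :=
        by gcongr
      have h3 : x t / (etaT + etasup * gsup) ≤ x t / (etaT + eta * g (x t)) :=
        div_le_div_of_nonneg_left (le_of_lt (lt_trans hMpos hxgt)) hd hdle
      linarith
    have hfb := (hf_bdd (x t)).2
    have hlb := (hlam_bdd t htpos).2
    linarith
  have hanti : StrictAntiOn x (Set.Icc t0 t1) :=
    strictAntiOn_of_deriv_neg (convex_Icc t0 t1)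
      (hcontx.mono (Set.Icc_subset_Icc ht0nonneg le_rfl)) hderivneg
  have := hanti (Set.left_mem_Icc.mpr ht0le) (Set.right_mem_Icc.mpr ht0le) ht0lt
  linarith [hgt t1 ht0lt le_rfl]
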